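/- Let (W,S) be a Coxeter system in which the order of every product of two distinct generators is at least 3 (or infinite). If w ∈ W satisfies ℓ(ws) > ℓ(w) and ℓ(wt) > ℓ(w) for distinct s,t ∈ S with m_{st} = ∞, then ℓ(w s t s t ⋯) = ℓ(w) + k for every alternating word of length k in s and t; in particular there exist elements of arbitrarily large length in the coset sequence w, ws, wst, wsts, …. -/

import Mathlib

open CoxeterSystem List

/-- A Coxeter matrix is *even* if every off-diagonal entry is even
(the entry `0`, denoting `∞`, counts as even, i.e. is also allowed). -/
def CoxeterMatrix.IsEven {B : Type*} (M : CoxeterMatrix B) : Prop :=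
  ∀ i i' : B, i ≠ i' → Even (M i i')

/-- The standard parabolic subgroup `W_T` generated by the simple reflections in `T`. -/
def CoxeterSystem.parabolic {B W : Type*} [Group W] {M : CoxeterMatrix B}
    (cs : CoxeterSystem M W) (T : Set B) : Subgroup W :=
  Subgroup.closure (cs.simple '' T)

/-- A subset `T` of generators is *spherical* if the parabolic subgroup `W_T` is finite. -/
def CoxeterSystem.IsSpherical {B W : Type*} [Group W] {M : CoxeterMatrix B}
    (cs : CoxeterSystem M W) (T : Set B) : Prop :=
  (cs.parabolic T : Set W).Finite

/-- The support of `w`: the set of generators occurring in a reduced expression for `w`. -/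
def CoxeterSystem.support {B W : Type*} [Group W] {M : CoxeterMatrix B}
    (cs : CoxeterSystem M W) (w : W) : Set B :=
  {i | ∃ ω : List B, cs.IsReduced ω ∧ cs.wordProd ω = w ∧ i ∈ ω}

set_option maxHeartbeats 1000000

open CoxeterSystem List

namespace StmtAux

open scoped Classical



open scoped Classical

variable {B : Type*}

/-! ### Trig identities -/

private lemma sin_addθ (θ a : ℝ) : Real.sin (a+θ) = Real.sin a * Real.cos θ + Real.cos a * Real.sin θ :=
  Real.sin_add a θ

private lemma cos_addθ (θ a : ℝ) : Real.cos (a+θ) = Real.cos a * Real.cos θ - Real.sin a * Real.sin θ :=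
  Real.cos_add a θ

private lemma sin_add2θ (θ a : ℝ) : Real.sin (a+2*θ)
    = (Real.sin a * Real.cos θ + Real.cos a * Real.sin θ) * Real.cos θ
      + (Real.cos a * Real.cos θ - Real.sin a * Real.sin θ) * Real.sin θ := by
  rw [show a+2*θ = (a+θ)+θ by ring, Real.sin_add (a+θ) θ, sin_addθ, cos_addθ]

private lemma cos_add2θ (θ a : ℝ) : Real.cos (a+2*θ)
    = (Real.cos a * Real.cos θ - Real.sin a * Real.sin θ) * Real.cos θ
      - (Real.sin a * Real.cos θ + Real.cos a * Real.sin θ) * Real.sin θ := by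
  rw [show a+2*θ = (a+θ)+θ by ring, Real.cos_add (a+θ) θ, sin_addθ, cos_addθ]

private lemma sin_add3θ (θ a : ℝ) : Real.sin (a+3*θ)
    = ((Real.sin a * Real.cos θ + Real.cos a * Real.sin θ) * Real.cos θ
      + (Real.cos a * Real.cos θ - Real.sin a * Real.sin θ) * Real.sin θ) * Real.cos θ
      + ((Real.cos a * Real.cos θ - Real.sin a * Real.sin θ) * Real.cos θ
      - (Real.sin a * Real.cos θ + Real.cos a * Real.sin θ) * Real.sin θ) * Real.sin θ := by
  rw [show a+3*θ = (a+2*θ)+θ by ring, Real.sin_add (a+2*θ) θ, sin_add2θ, cos_add2θ]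

private lemma trigI (θ a : ℝ) :
    (4*(Real.cos θ)^2 - 1) * Real.sin (a+θ) - 2*Real.cos θ * Real.sin a = Real.sin (a+3*θ) := by
  have h := Real.sin_sq_add_cos_sq θ
  rw [sin_addθ, sin_add3θ]
  linear_combination (3*Real.cos θ*Real.sin a + Real.sin θ*Real.cos a) * h

private lemma trigII (θ a : ℝ) :
    2*Real.cos θ * Real.sin (a+θ) - Real.sin a = Real.sin (a+2*θ) := by
  have h := Real.sin_sq_add_cos_sq θ
  rw [sin_addθ, sin_add2θ]
  linear_combination Real.sin a * h

private lemma trigIII (θ a : ℝ) :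
    (4*(Real.cos θ)^2 - 1) * (-Real.sin a) - 2*Real.cos θ * (-Real.sin (a-θ))
      = -Real.sin (a+2*θ) := by
  have h := Real.sin_sq_add_cos_sq θ
  rw [Real.sin_sub, sin_add2θ]
  linear_combination (-Real.sin a) * h

private lemma trigIV (θ a : ℝ) :
    2*Real.cos θ * (-Real.sin a) - (-Real.sin (a-θ)) = -Real.sin (a+θ) := by
  rw [Real.sin_sub, sin_addθ]
  ring

/-! ### The geometric representation -/

noncomputable def kf (M : CoxeterMatrix B) (i j : B) : ℝ :=
  if M i j = 0 then -1 else -Real.cos (Real.pi / M i j)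

lemma kf_diag (M : CoxeterMatrix B) (i : B) : kf M i i = 1 := by
  rw [kf, if_neg (by simp [M.diagonal i]), M.diagonal i]
  simp [Real.cos_pi]

lemma kf_symm (M : CoxeterMatrix B) (i j : B) : kf M i j = kf M j i := by
  rw [kf, kf, M.symmetric i j]

noncomputable def bform (M : CoxeterMatrix B) (i : B) : (B →₀ ℝ) →ₗ[ℝ] ℝ :=
  Finsupp.linearCombination ℝ (fun j => kf M i j)

lemma bform_single (M : CoxeterMatrix B) (i j : B) (a : ℝ) :
    bform M i (Finsupp.single j a) = a * kf M i j := by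
  rw [bform, Finsupp.linearCombination_single, smul_eq_mul]

noncomputable def sigmaV (M : CoxeterMatrix B) (i : B) : Module.End ℝ (B →₀ ℝ) :=
  LinearMap.id - (2 : ℝ) • (bform M i).smulRight (Finsupp.single i 1)

lemma sigmaV_apply (M : CoxeterMatrix B) (i : B) (x : B →₀ ℝ) :
    sigmaV M i x = x - (2 * bform M i x) • Finsupp.single i 1 := by
  rw [sigmaV]
  simp [LinearMap.smulRight_apply, smul_smul]

lemma bform_sigmaV (M : CoxeterMatrix B) (i j : B) (x : B →₀ ℝ) :
    bform M j (sigmaV M i x) = bform M j x - 2 * bform M i x * kf M j i := by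
  rw [sigmaV_apply, map_sub, map_smul, bform_single]
  simp only [smul_eq_mul]
  ring

lemma sigmaV_fixed (M : CoxeterMatrix B) (i : B) (x : B →₀ ℝ) (h : bform M i x = 0) :
    sigmaV M i x = x := by
  rw [sigmaV_apply, h]
  simp

lemma sigmaV_invol (M : CoxeterMatrix B) (i : B) : sigmaV M i * sigmaV M i = 1 := by
  apply LinearMap.ext
  intro x
  rw [Module.End.mul_apply, Module.End.one_apply]
  have hb : bform M i (sigmaV M i x) = - bform M i x := by
    rw [bform_sigmaV, kf_diag]; ring
  rw [sigmaV_apply M i (sigmaV M i x), hb, sigmaV_apply]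
  module

/-- Coefficient recursion for powers of the composite reflection on the plane. -/
noncomputable def coef (cc : ℝ) (p : ℝ × ℝ) : ℕ → ℝ × ℝ
  | 0 => p
  | n+1 => ((4*cc^2-1) * (coef cc p n).1 - 2*cc*(coef cc p n).2,
            2*cc*(coef cc p n).1 - (coef cc p n).2)

lemma pow_apply_plane (M : CoxeterMatrix B) {i j : B} (cc : ℝ)
    (hkij : kf M i j = -cc) (hkji : kf M j i = -cc) (n : ℕ) :
    ((sigmaV M i * sigmaV M j)^n) (Finsupp.single i 1)
        = (coef cc (1,0) n).1 • Finsupp.single i (1:ℝ) + (coef cc (1,0) n).2 • Finsupp.single j (1:ℝ)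
      ∧ ((sigmaV M i * sigmaV M j)^n) (Finsupp.single j 1)
        = (coef cc (0,1) n).1 • Finsupp.single i (1:ℝ) + (coef cc (0,1) n).2 • Finsupp.single j (1:ℝ) := by
  have hbii : bform M i (Finsupp.single i (1:ℝ)) = 1 := by rw [bform_single, kf_diag]; ring
  have hbjj : bform M j (Finsupp.single j (1:ℝ)) = 1 := by rw [bform_single, kf_diag]; ring
  have hbij : bform M i (Finsupp.single j (1:ℝ)) = -cc := by rw [bform_single, hkij]; ring
  have hbji : bform M j (Finsupp.single i (1:ℝ)) = -cc := by rw [bform_single, hkji]; ring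
  have h1 : sigmaV M j (Finsupp.single j (1:ℝ)) = -Finsupp.single j (1:ℝ) := by
    rw [sigmaV_apply, hbjj]; module
  have h2 : sigmaV M i (Finsupp.single j (1:ℝ))
      = Finsupp.single j (1:ℝ) + (2*cc) • Finsupp.single i (1:ℝ) := by
    rw [sigmaV_apply, hbij]; module
  have h3 : sigmaV M j (Finsupp.single i (1:ℝ))
      = Finsupp.single i (1:ℝ) + (2*cc) • Finsupp.single j (1:ℝ) := by
    rw [sigmaV_apply, hbji]; module
  have h4 : sigmaV M i (Finsupp.single i (1:ℝ)) = -Finsupp.single i (1:ℝ) := by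
    rw [sigmaV_apply, hbii]; module
  have hAi : (sigmaV M i * sigmaV M j) (Finsupp.single i (1:ℝ))
      = (4*cc^2-1) • Finsupp.single i (1:ℝ) + (2*cc) • Finsupp.single j (1:ℝ) := by
    rw [Module.End.mul_apply, h3, map_add, map_smul, h4, h2]
    module
  have hAj : (sigmaV M i * sigmaV M j) (Finsupp.single j (1:ℝ))
      = (-(2*cc)) • Finsupp.single i (1:ℝ) + (-1 : ℝ) • Finsupp.single j (1:ℝ) := by
    rw [Module.End.mul_apply, h1, map_neg, h2]
    module
  induction n with
  | zero => constructor <;> simp [coef]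
  | succ n ih =>
    obtain ⟨ih1, ih2⟩ := ih
    constructor
    · rw [pow_succ', Module.End.mul_apply, ih1, map_add, map_smul, map_smul, hAi, hAj]
      rw [show coef cc (1,0) (n+1)
          = ((4*cc^2-1) * (coef cc (1,0) n).1 - 2*cc*(coef cc (1,0) n).2,
             2*cc*(coef cc (1,0) n).1 - (coef cc (1,0) n).2) from rfl]
      simp only [smul_add, smul_smul]
      module
    · rw [pow_succ', Module.End.mul_apply, ih2, map_add, map_smul, map_smul, hAi, hAj]
      rw [show coef cc (0,1) (n+1)
          = ((4*cc^2-1) * (coef cc (0,1) n).1 - 2*cc*(coef cc (0,1) n).2,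
             2*cc*(coef cc (0,1) n).1 - (coef cc (0,1) n).2) from rfl]
      simp only [smul_add, smul_smul]
      module

lemma coefA_trig (θ : ℝ) (n : ℕ) :
    Real.sin θ * (coef (Real.cos θ) (1,0) n).1 = Real.sin ((2*n+1)*θ)
    ∧ Real.sin θ * (coef (Real.cos θ) (1,0) n).2 = Real.sin ((2*n)*θ) := by
  induction n with
  | zero => constructor <;> simp [coef] <;> ring_nf <;> simp
  | succ n ih =>
    obtain ⟨ih1, ih2⟩ := ih
    have e1 : ((2*(n+1)+1 : ℕ) : ℝ)*θ = (2*n)*θ + 3*θ := by push_cast; ring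
    have e2 : ((2*(n+1) : ℕ) : ℝ)*θ = (2*n)*θ + 2*θ := by push_cast; ring
    constructor
    · show Real.sin θ * ((4*(Real.cos θ)^2-1) * (coef (Real.cos θ) (1,0) n).1
          - 2*(Real.cos θ)*(coef (Real.cos θ) (1,0) n).2) = _
      push_cast
      calc Real.sin θ * ((4*(Real.cos θ)^2-1) * (coef (Real.cos θ) (1,0) n).1
          - 2*(Real.cos θ)*(coef (Real.cos θ) (1,0) n).2)
          = (4*(Real.cos θ)^2-1) * (Real.sin θ * (coef (Real.cos θ) (1,0) n).1)
            - 2*(Real.cos θ) * (Real.sin θ * (coef (Real.cos θ) (1,0) n).2) := by ring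
        _ = (4*(Real.cos θ)^2-1) * Real.sin ((2*n)*θ+θ) - 2*(Real.cos θ) * Real.sin ((2*n)*θ) := by
            rw [ih1, ih2]; congr 2; push_cast; ring
        _ = Real.sin ((2*n)*θ + 3*θ) := trigI θ ((2*n)*θ)
        _ = _ := by congr 1; push_cast; ring
    · show Real.sin θ * (2*(Real.cos θ)*(coef (Real.cos θ) (1,0) n).1
          - (coef (Real.cos θ) (1,0) n).2) = _
      calc Real.sin θ * (2*(Real.cos θ)*(coef (Real.cos θ) (1,0) n).1
          - (coef (Real.cos θ) (1,0) n).2)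
          = 2*(Real.cos θ) * (Real.sin θ * (coef (Real.cos θ) (1,0) n).1)
            - (Real.sin θ * (coef (Real.cos θ) (1,0) n).2) := by ring
        _ = 2*(Real.cos θ) * Real.sin ((2*n)*θ+θ) - Real.sin ((2*n)*θ) := by
            rw [ih1, ih2]; congr 2; push_cast; ring
        _ = Real.sin ((2*n)*θ + 2*θ) := trigII θ ((2*n)*θ)
        _ = _ := by congr 1; push_cast; ring

lemma coefB_trig (θ : ℝ) (n : ℕ) :
    Real.sin θ * (coef (Real.cos θ) (0,1) n).1 = -Real.sin ((2*n)*θ)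
    ∧ Real.sin θ * (coef (Real.cos θ) (0,1) n).2 = -Real.sin ((2*n)*θ - θ) := by
  induction n with
  | zero =>
    constructor
    · simp [coef]
    · show Real.sin θ * 1 = _
      simp [coef]
  | succ n ih =>
    obtain ⟨ih1, ih2⟩ := ih
    constructor
    · show Real.sin θ * ((4*(Real.cos θ)^2-1) * (coef (Real.cos θ) (0,1) n).1
          - 2*(Real.cos θ)*(coef (Real.cos θ) (0,1) n).2) = _
      calc Real.sin θ * ((4*(Real.cos θ)^2-1) * (coef (Real.cos θ) (0,1) n).1
          - 2*(Real.cos θ)*(coef (Real.cos θ) (0,1) n).2)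
          = (4*(Real.cos θ)^2-1) * (Real.sin θ * (coef (Real.cos θ) (0,1) n).1)
            - 2*(Real.cos θ) * (Real.sin θ * (coef (Real.cos θ) (0,1) n).2) := by ring
        _ = (4*(Real.cos θ)^2-1) * (-Real.sin ((2*n)*θ))
            - 2*(Real.cos θ) * (-Real.sin ((2*n)*θ - θ)) := by rw [ih1, ih2]
        _ = -Real.sin ((2*n)*θ + 2*θ) := trigIII θ ((2*n)*θ)
        _ = _ := by congr 2; push_cast; ring
    · show Real.sin θ * (2*(Real.cos θ)*(coef (Real.cos θ) (0,1) n).1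
          - (coef (Real.cos θ) (0,1) n).2) = _
      calc Real.sin θ * (2*(Real.cos θ)*(coef (Real.cos θ) (0,1) n).1
          - (coef (Real.cos θ) (0,1) n).2)
          = 2*(Real.cos θ) * (Real.sin θ * (coef (Real.cos θ) (0,1) n).1)
            - (Real.sin θ * (coef (Real.cos θ) (0,1) n).2) := by ring
        _ = 2*(Real.cos θ) * (-Real.sin ((2*n)*θ))
            - (-Real.sin ((2*n)*θ - θ)) := by rw [ih1, ih2]
        _ = -Real.sin ((2*n)*θ + θ) := trigIV θ ((2*n)*θ)
        _ = _ := by congr 2; push_cast; ring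

lemma coef_at_m (m : ℕ) (hm : 2 ≤ m) :
    coef (Real.cos (Real.pi / m)) (1,0) m = (1,0)
    ∧ coef (Real.cos (Real.pi / m)) (0,1) m = (0,1) := by
  set θ := Real.pi / m with hθ
  have hmR : (m : ℝ) ≠ 0 := by positivity
  have hmθ : (m : ℝ) * θ = Real.pi := by
    rw [hθ]; field_simp
  have hθpos : 0 < θ := by
    rw [hθ]; positivity
  have hθlt : θ < Real.pi := by
    rw [hθ]
    calc Real.pi / m ≤ Real.pi / 2 := by
          apply div_le_div_of_nonneg_left Real.pi_pos.le (by norm_num)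
          exact_mod_cast hm
      _ < Real.pi := by linarith [Real.pi_pos]
  have hsin : Real.sin θ ≠ 0 := ne_of_gt (Real.sin_pos_of_pos_of_lt_pi hθpos hθlt)
  have h2m1 : Real.sin ((2*(m:ℝ)+1)*θ) = Real.sin θ := by
    rw [show (2*(m:ℝ)+1)*θ = θ + 2*((m:ℝ)*θ) by ring, hmθ, show θ + 2*Real.pi = θ + 2*Real.pi from rfl]
    rw [Real.sin_add_two_pi]
  have h2m : Real.sin ((2*(m:ℝ))*θ) = 0 := by
    rw [show (2*(m:ℝ))*θ = 2*((m:ℝ)*θ) by ring, hmθ]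
    rw [show (2*Real.pi) = 0 + 2*Real.pi by ring, Real.sin_add_two_pi, Real.sin_zero]
  have h2mm1 : Real.sin ((2*(m:ℝ))*θ - θ) = -Real.sin θ := by
    rw [show (2*(m:ℝ))*θ - θ = -θ + 2*((m:ℝ)*θ) by ring, hmθ, Real.sin_add_two_pi, Real.sin_neg]
  obtain ⟨hA1, hA2⟩ := coefA_trig θ m
  obtain ⟨hB1, hB2⟩ := coefB_trig θ m
  have e1 : (coef (Real.cos θ) (1,0) m).1 = 1 := by
    apply mul_left_cancel₀ hsin
    rw [hA1, mul_one]
    push_cast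
    exact h2m1
  have e2 : (coef (Real.cos θ) (1,0) m).2 = 0 := by
    apply mul_left_cancel₀ hsin
    rw [hA2, mul_zero]
    push_cast
    exact h2m
  have e3 : (coef (Real.cos θ) (0,1) m).1 = 0 := by
    apply mul_left_cancel₀ hsin
    rw [hB1, mul_zero]
    push_cast
    rw [h2m]
    ring
  have e4 : (coef (Real.cos θ) (0,1) m).2 = 1 := by
    apply mul_left_cancel₀ hsin
    rw [hB2, mul_one]
    push_cast
    rw [h2mm1]
    ring
  constructor
  · ext
    · exact e1
    · exact e2
  · ext
    · exact e3
    · exact e4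

lemma sigmaV_braid (M : CoxeterMatrix B) {i j : B} (hij : i ≠ j) (hm : 2 ≤ M i j) :
    (sigmaV M i * sigmaV M j) ^ (M i j) = 1 := by
  set m := M i j with hmdef
  set θ := Real.pi / m with hθ
  set cc := Real.cos θ with hccdef
  have hm0 : m ≠ 0 := by omega
  have hkij : kf M i j = -cc := by rw [kf, if_neg (by omega : ¬ M i j = 0)]
  have hkji : kf M j i = -cc := by rw [← kf_symm]; exact hkij
  -- cc^2 < 1
  have hθpos : 0 < θ := by rw [hθ]; positivity
  have hθlt : θ < Real.pi := by
    rw [hθ]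
    calc Real.pi / m ≤ Real.pi / 2 := by
          apply div_le_div_of_nonneg_left Real.pi_pos.le (by norm_num)
          exact_mod_cast hm
      _ < Real.pi := by linarith [Real.pi_pos]
  have hsin : 0 < Real.sin θ := Real.sin_pos_of_pos_of_lt_pi hθpos hθlt
  have hD : 1 - cc^2 ≠ 0 := by
    have := Real.sin_sq_add_cos_sq θ
    have : 1 - cc^2 = (Real.sin θ)^2 := by rw [hccdef]; nlinarith [this]
    rw [this]
    positivity
  apply LinearMap.ext
  intro x
  rw [Module.End.one_apply]
  -- decomposition
  set F := bform M i x with hF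
  set G := bform M j x with hG
  set a := (F + cc*G)/(1-cc^2) with ha
  set b := (cc*F + G)/(1-cc^2) with hb
  set q := x - a • Finsupp.single i (1:ℝ) - b • Finsupp.single j (1:ℝ) with hq
  have hbii : bform M i (Finsupp.single i (1:ℝ)) = 1 := by rw [bform_single, kf_diag]; ring
  have hbjj : bform M j (Finsupp.single j (1:ℝ)) = 1 := by rw [bform_single, kf_diag]; ring
  have hbij : bform M i (Finsupp.single j (1:ℝ)) = -cc := by rw [bform_single, hkij]; ring
  have hbji : bform M j (Finsupp.single i (1:ℝ)) = -cc := by rw [bform_single, hkji]; ring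
  have hqi : bform M i q = 0 := by
    rw [hq, map_sub, map_sub, map_smul, map_smul, hbii, hbij, ← hF]
    simp only [smul_eq_mul]
    rw [ha, hb]
    field_simp
    ring
  have hqj : bform M j q = 0 := by
    rw [hq, map_sub, map_sub, map_smul, map_smul, hbjj, hbji, ← hG]
    simp only [smul_eq_mul]
    rw [ha, hb]
    field_simp
    ring
  have hqfix : ∀ n : ℕ, ((sigmaV M i * sigmaV M j) ^ n) q = q := by
    intro n
    induction n with
    | zero => simp
    | succ n ih =>
      rw [pow_succ', Module.End.mul_apply, ih, Module.End.mul_apply,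
        sigmaV_fixed M j q hqj, sigmaV_fixed M i q hqi]
  have hx : x = a • Finsupp.single i (1:ℝ) + b • Finsupp.single j (1:ℝ) + q := by
    rw [hq]; module
  obtain ⟨hp1, hp2⟩ := pow_apply_plane M cc hkij hkji m
  obtain ⟨hc1, hc2⟩ := coef_at_m m hm
  have hcc2 : Real.cos (Real.pi / m) = cc := by rw [hccdef, hθ]
  rw [hcc2] at hc1 hc2
  rw [hc1] at hp1
  rw [hc2] at hp2
  conv_lhs => rw [hx]
  rw [map_add, map_add, map_smul, map_smul, hqfix, hp1, hp2]
  rw [hx]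
  simp only []
  module

lemma sigmaV_liftable (M : CoxeterMatrix B) : M.IsLiftable (sigmaV M) := by
  intro i j
  rcases em (i = j) with rfl | hij
  · rw [M.diagonal i, pow_one]
    exact sigmaV_invol M i
  · rcases em (M i j = 0) with h0 | h0
    · rw [h0, pow_zero]
    · have h1 : M i j ≠ 1 := M.off_diagonal i j hij
      exact sigmaV_braid M hij (by omega)

lemma sigmaV_infinite (M : CoxeterMatrix B) {i j : B} (hij : i ≠ j) (h0 : M i j = 0) (n : ℕ) :
    ((sigmaV M i * sigmaV M j) ^ n) (Finsupp.single i 1)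
      = (2*(n:ℝ)+1) • Finsupp.single i (1:ℝ) + (2*(n:ℝ)) • Finsupp.single j (1:ℝ) := by
  have hkij : kf M i j = -1 := by rw [kf, if_pos h0]
  have hkji : kf M j i = -1 := by rw [← kf_symm]; exact hkij
  obtain ⟨hp1, _⟩ := pow_apply_plane M 1 (by rw [hkij]) (by rw [hkji]) n
  rw [hp1]
  have hco : ∀ k : ℕ, coef 1 ((1:ℝ),(0:ℝ)) k = (2*(k:ℝ)+1, 2*(k:ℝ)) := by
    intro k
    induction k with
    | zero => simp [coef]
    | succ k ih =>
      show ((4*(1:ℝ)^2-1) * (coef 1 ((1:ℝ),(0:ℝ)) k).1 - 2*1*(coef 1 ((1:ℝ),(0:ℝ)) k).2,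
            2*1*(coef 1 ((1:ℝ),(0:ℝ)) k).1 - (coef 1 ((1:ℝ),(0:ℝ)) k).2) = _
      rw [ih]
      ext
      · simp only []
        push_cast
        ring
      · simp only []
        push_cast
        ring
  rw [hco n]



open scoped Classical

variable {B W : Type*} [Group W] {M : CoxeterMatrix B} (cs : CoxeterSystem M W)

lemma zmod2_add_self (a : ZMod 2) : a + a = 0 := by
  have h2 : (2 : ZMod 2) = 0 := by decide
  calc a + a = 2 * a := by ring
    _ = 0 := by rw [h2]; ring

noncomputable def sigma (i : B) : Equiv.Perm (W × ZMod 2) :=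
  Function.Involutive.toPerm
    (fun p => (cs.simple i * p.1 * cs.simple i, p.2 + if p.1 = cs.simple i then 1 else 0))
    (by
      rintro ⟨x, e⟩
      have hs := cs.simple_mul_simple_self i
      have h1 : cs.simple i * (cs.simple i * x * cs.simple i) * cs.simple i = x := by
        calc cs.simple i * (cs.simple i * x * cs.simple i) * cs.simple i
            = (cs.simple i * cs.simple i) * x * (cs.simple i * cs.simple i) := by group
          _ = x := by rw [hs]; group
      have h2 : (cs.simple i * x * cs.simple i = cs.simple i) ↔ (x = cs.simple i) := by
        constructor
        · intro h
          have := congrArg (fun y => cs.simple i * y * cs.simple i) h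
          simpa [h1, hs] using this
        · rintro rfl; rw [hs]; group
      simp only [Prod.mk.injEq, h1, h2]
      refine ⟨trivial, ?_⟩
      rcases em (x = cs.simple i) with h | h <;>
        simp [h, add_assoc, zmod2_add_self])

@[simp] lemma sigma_apply (i : B) (x : W) (e : ZMod 2) :
    sigma cs i (x, e) = (cs.simple i * x * cs.simple i, e + if x = cs.simple i then 1 else 0) :=
  rfl

private lemma simple_semiconj (i j : B) (n : ℕ) :
    cs.simple j * (cs.simple i * cs.simple j) ^ n
      = (cs.simple j * cs.simple i) ^ n * cs.simple j := by
  have : SemiconjBy (cs.simple j) (cs.simple i * cs.simple j) (cs.simple j * cs.simple i) := by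
    unfold SemiconjBy; group
  simpa [SemiconjBy] using this.pow_right n

lemma sigma_mul_pow_apply (i j : B) (n : ℕ) (x : W) (e : ZMod 2) :
    ((sigma cs i * sigma cs j) ^ n) (x, e) =
      ((cs.simple i * cs.simple j) ^ n * x * ((cs.simple i * cs.simple j) ^ n)⁻¹,
        e + ∑ a ∈ Finset.range (2 * n),
          (if x = (cs.simple j * cs.simple i) ^ a * cs.simple j then 1 else 0)) := by
  induction n with
  | zero => simp
  | succ n ih =>
    have key : ((sigma cs i * sigma cs j) ^ (n+1)) (x, e)
        = (sigma cs i) ((sigma cs j) (((sigma cs i * sigma cs j) ^ n) (x, e))) := by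
      rw [pow_succ']
      rfl
    rw [key, ih]
    set z := cs.simple i * cs.simple j with hz
    set y := cs.simple j * cs.simple i with hy
    have hzy : (z⁻¹ : W) = y := by
      rw [hz, hy]; rw [mul_inv_rev, cs.inv_simple, cs.inv_simple]
    have hconj : ∀ (g : W), (z ^ n * x * (z ^ n)⁻¹ = g) ↔ (x = (z ^ n)⁻¹ * g * z ^ n) := by
      intro g
      constructor
      · intro h; rw [← h]; group
      · intro h; rw [h]; group
    have hzn : (z ^ n)⁻¹ = y ^ n := by rw [← inv_pow, hzy]
    have cond0 : (z ^ n * x * (z ^ n)⁻¹ = cs.simple j) ↔ (x = y ^ (2*n) * cs.simple j) := by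
      rw [hconj]
      have : (z ^ n)⁻¹ * cs.simple j * z ^ n = y ^ (2*n) * cs.simple j := by
        rw [hzn, mul_assoc, hz, simple_semiconj, ← hy, ← mul_assoc, ← pow_add, two_mul]
      rw [this]
    have cond1 : (cs.simple j * (z ^ n * x * (z ^ n)⁻¹) * cs.simple j = cs.simple i)
        ↔ (x = y ^ (2*n+1) * cs.simple j) := by
      have hstep : (cs.simple j * (z ^ n * x * (z ^ n)⁻¹) * cs.simple j = cs.simple i)
          ↔ (z ^ n * x * (z ^ n)⁻¹ = cs.simple j * cs.simple i * cs.simple j) := by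
        constructor
        · intro h
          have := congrArg (fun g => cs.simple j * g * cs.simple j) h
          calc z ^ n * x * (z ^ n)⁻¹
              = (cs.simple j * cs.simple j) * (z ^ n * x * (z ^ n)⁻¹) * (cs.simple j * cs.simple j) := by
                rw [cs.simple_mul_simple_self]; group
            _ = cs.simple j * (cs.simple j * (z ^ n * x * (z ^ n)⁻¹) * cs.simple j) * cs.simple j := by
                group
            _ = cs.simple j * cs.simple i * cs.simple j := by rw [h]
        · intro h
          rw [h]
          calc cs.simple j * (cs.simple j * cs.simple i * cs.simple j) * cs.simple j
              = (cs.simple j * cs.simple j) * cs.simple i * (cs.simple j * cs.simple j) := by group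
            _ = cs.simple i := by rw [cs.simple_mul_simple_self]; group
      rw [hstep, hconj]
      have : (z ^ n)⁻¹ * (cs.simple j * cs.simple i * cs.simple j) * z ^ n
          = y ^ (2*n+1) * cs.simple j := by
        rw [hzn]
        calc y ^ n * (cs.simple j * cs.simple i * cs.simple j) * z ^ n
            = y ^ n * (cs.simple j * cs.simple i) * (cs.simple j * z ^ n) := by group
          _ = y ^ n * y * (y ^ n * cs.simple j) := by rw [← hy, hz, simple_semiconj, ← hy]
          _ = y ^ (2*n+1) * cs.simple j := by
              rw [show (2*n+1) = n + 1 + n by ring, pow_add, pow_add, pow_one]; group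
      rw [this]
    simp only [sigma_apply]
    rw [Prod.mk.injEq]
    constructor
    · calc cs.simple i * (cs.simple j * (z ^ n * x * (z ^ n)⁻¹) * cs.simple j) * cs.simple i
          = (cs.simple i * cs.simple j) * (z ^ n * x * (z ^ n)⁻¹) * (cs.simple j * cs.simple i) := by
            group
        _ = z * (z ^ n * x * (z ^ n)⁻¹) * z⁻¹ := by rw [← hz, ← hy, ← hzy]
        _ = z ^ (n+1) * x * (z ^ (n+1))⁻¹ := by rw [pow_succ']; group
    · rw [cond0, cond1]
      rw [show 2 * (n+1) = (2*n + 1) + 1 by ring]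
      rw [Finset.sum_range_succ, Finset.sum_range_succ]
      ring




lemma sigma_liftable : M.IsLiftable (fun i => sigma cs i) := by
  intro i j
  ext ⟨x, e⟩
  · rw [sigma_mul_pow_apply]
    simp only [cs.simple_mul_simple_pow i j, Equiv.Perm.one_apply, one_mul, inv_one, mul_one]
  · rw [sigma_mul_pow_apply]
    simp only [cs.simple_mul_simple_pow i j, Equiv.Perm.one_apply, one_mul, inv_one, mul_one]
    have hper : ∀ a : ℕ, (cs.simple j * cs.simple i) ^ (M i j + a)
        = (cs.simple j * cs.simple i) ^ a := by
      intro a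
      rw [pow_add, cs.simple_mul_simple_pow' i j, one_mul]
    have : ∑ a ∈ Finset.range (2 * M i j),
        (if x = (cs.simple j * cs.simple i) ^ a * cs.simple j then (1 : ZMod 2) else 0) = 0 := by
      rw [two_mul, Finset.sum_range_add]
      have heq : ∀ a ∈ Finset.range (M i j),
          (if x = (cs.simple j * cs.simple i) ^ (M i j + a) * cs.simple j then (1 : ZMod 2) else 0)
          = (if x = (cs.simple j * cs.simple i) ^ a * cs.simple j then (1 : ZMod 2) else 0) := by
        intro a _
        rw [hper]
      rw [Finset.sum_congr rfl heq]
      exact zmod2_add_self _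
    rw [this, add_zero]

noncomputable def Phi : W →* Equiv.Perm (W × ZMod 2) :=
  cs.lift ⟨fun i => sigma cs i, sigma_liftable cs⟩

lemma Phi_simple (i : B) : Phi cs (cs.simple i) = sigma cs i :=
  cs.lift_apply_simple (sigma_liftable cs) i

lemma phi_wordProd (ω : List B) (x : W) (e : ZMod 2) :
    Phi cs (cs.wordProd ω) (x, e) =
      (cs.wordProd ω * x * (cs.wordProd ω)⁻¹,
       e + ((cs.rightInvSeq ω).count x : ZMod 2)) := by
  induction ω generalizing e with
  | nil => simp [cs.wordProd_nil]
  | cons i ω ih =>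
    rw [cs.wordProd_cons, map_mul, Equiv.Perm.mul_apply, ih, Phi_simple, sigma_apply]
    have hcount : (cs.rightInvSeq (i :: ω)).count x
        = (cs.rightInvSeq ω).count x
          + (if x = (cs.wordProd ω)⁻¹ * cs.simple i * cs.wordProd ω then 1 else 0) := by
      show ((( (cs.wordProd ω)⁻¹ * cs.simple i * cs.wordProd ω)) :: cs.rightInvSeq ω).count x = _
      rw [List.count_cons]
      congr 1
      refine if_congr ?_ rfl rfl
      rw [beq_iff_eq, eq_comm]
    have hcond : (cs.wordProd ω * x * (cs.wordProd ω)⁻¹ = cs.simple i)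
        ↔ (x = (cs.wordProd ω)⁻¹ * cs.simple i * cs.wordProd ω) := by
      constructor
      · intro h; rw [← h]; group
      · intro h; rw [h]; group
    rw [Prod.mk.injEq]
    constructor
    · rw [mul_inv_rev, cs.inv_simple]; group
    · rw [hcount, hcond]
      push_cast
      rcases em (x = (cs.wordProd ω)⁻¹ * cs.simple i * cs.wordProd ω) with h | h <;>
        simp [h] <;> ring

noncomputable def eta (w x : W) : ZMod 2 := (Phi cs w (x, 0)).2

lemma eta_wordProd (ω : List B) (x : W) :
    eta cs (cs.wordProd ω) x = ((cs.rightInvSeq ω).count x : ZMod 2) := by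
  rw [eta, phi_wordProd]
  simp

lemma phi_apply (w x : W) (e : ZMod 2) :
    Phi cs w (x, e) = (w * x * w⁻¹, e + eta cs w x) := by
  obtain ⟨ω, rfl⟩ := cs.wordProd_surjective w
  rw [phi_wordProd, eta_wordProd]

lemma eta_mul (a b x : W) : eta cs (a * b) x = eta cs b x + eta cs a (b * x * b⁻¹) := by
  have : Phi cs (a * b) (x, 0) = Phi cs a (Phi cs b (x, 0)) := by
    rw [map_mul, Equiv.Perm.mul_apply]
  rw [eta, this, phi_apply, phi_apply]
  simp

lemma eta_simple (i : B) (x : W) :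
    eta cs (cs.simple i) x = if x = cs.simple i then 1 else 0 := by
  rw [eta, Phi_simple, sigma_apply]
  simp

lemma descent_of_eta_one {w : W} {i : B} (h : eta cs w (cs.simple i) = 1) :
    cs.IsRightDescent w i := by
  obtain ⟨ω, hlen, rfl⟩ := cs.exists_reduced_word w
  have hred : cs.IsReduced ω := by rw [CoxeterSystem.IsReduced, hlen]
  rw [eta_wordProd] at h
  have hmem : cs.simple i ∈ cs.rightInvSeq ω := by
    by_contra hmem
    rw [List.count_eq_zero_of_not_mem hmem] at h
    simp at h
  exact (cs.isRightInversion_of_mem_rightInvSeq hred hmem).2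

lemma eta_one_of_descent {w : W} {i : B} (h : cs.IsRightDescent w i) :
    eta cs w (cs.simple i) = 1 := by
  have hw : w = (w * cs.simple i) * cs.simple i := by
    rw [mul_assoc, cs.simple_mul_simple_self, mul_one]
  have hcoc : eta cs w (cs.simple i)
      = eta cs (cs.simple i) (cs.simple i)
        + eta cs (w * cs.simple i) (cs.simple i * cs.simple i * (cs.simple i)⁻¹) := by
    conv_lhs => rw [hw]
    rw [eta_mul]
  have h1 : cs.simple i * cs.simple i * (cs.simple i)⁻¹ = cs.simple i := by group
  have h2 : eta cs (cs.simple i) (cs.simple i) = 1 := by rw [eta_simple]; simp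
  have h3 : eta cs (w * cs.simple i) (cs.simple i) = 0 := by
    by_contra h3
    have hone : eta cs (w * cs.simple i) (cs.simple i) = 1 := by
      have : ∀ a : ZMod 2, a ≠ 0 → a = 1 := by decide
      exact this _ h3
    have hd := descent_of_eta_one cs hone
    rw [CoxeterSystem.IsRightDescent, mul_assoc, cs.simple_mul_simple_self, mul_one] at hd
    exact lt_asymm h hd
  rw [hcoc, h1, h2, h3, add_zero]

lemma mem_ris_of_descent {w : W} {i : B} (h : cs.IsRightDescent w i)
    {ω : List B} (hω : cs.IsReduced ω) (hπ : cs.wordProd ω = w) :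
    cs.simple i ∈ cs.rightInvSeq ω := by
  have := eta_one_of_descent cs h
  rw [← hπ, eta_wordProd] at this
  by_contra hmem
  rw [List.count_eq_zero_of_not_mem hmem] at this
  simp at this



open scoped Classical

variable {B W : Type*} [Group W] {M : CoxeterMatrix B} (cs : CoxeterSystem M W)

lemma rightInvSeq_append (ω α : List B) :
    cs.rightInvSeq (ω ++ α) =
      (cs.rightInvSeq ω).map (fun r => (cs.wordProd α)⁻¹ * r * cs.wordProd α)
        ++ cs.rightInvSeq α := by
  induction ω with
  | nil => simp
  | cons i ω ih =>
    show ((cs.wordProd (ω ++ α))⁻¹ * cs.simple i * cs.wordProd (ω ++ α)) :: cs.rightInvSeq (ω ++ α)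
        = _
    rw [ih, cs.wordProd_append]
    show _ = ((cs.wordProd α)⁻¹ * ((cs.wordProd ω)⁻¹ * cs.simple i * cs.wordProd ω) * cs.wordProd α)
        :: ((cs.rightInvSeq ω).map _ ++ cs.rightInvSeq α)
    congr 1
    rw [mul_inv_rev]
    group

lemma mem_alternatingWord {i i' c : B} {n : ℕ} (h : c ∈ alternatingWord i i' n) :
    c = i ∨ c = i' := by
  induction n with
  | zero => simp [alternatingWord] at h
  | succ n ih =>
    rw [alternatingWord_succ'] at h
    rcases List.mem_cons.mp h with h | h
    · rcases em (Even n) with hn | hn <;> simp [hn] at h <;> tauto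
    · exact ih h

lemma simple_semiconj' (i j : B) (n : ℕ) :
    cs.simple j * (cs.simple i * cs.simple j) ^ n
      = (cs.simple j * cs.simple i) ^ n * cs.simple j := by
  have : SemiconjBy (cs.simple j) (cs.simple i * cs.simple j) (cs.simple j * cs.simple i) := by
    unfold SemiconjBy; group
  simpa [SemiconjBy] using this.pow_right n

lemma mem_ris_alternatingWord {b a : B} {n : ℕ} {r : W}
    (h : r ∈ cs.rightInvSeq (alternatingWord b a n)) :
    ∃ e < n, r = (cs.simple a * cs.simple b) ^ e * cs.simple a := by
  induction n with
  | zero => simp [alternatingWord] at h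
  | succ n ih =>
    have hinv : ((cs.simple b * cs.simple a) : W)⁻¹ = cs.simple a * cs.simple b := by
      rw [mul_inv_rev, cs.inv_simple, cs.inv_simple]
    rw [alternatingWord_succ'] at h
    rcases List.mem_cons.mp h with h | h
    · refine ⟨n, Nat.lt_succ_self n, ?_⟩
      rcases Nat.even_or_odd n with hn | hn
      · obtain ⟨q, hq⟩ := hn
        have hc : (if Even n then a else b) = a := if_pos ⟨q, hq⟩
        rw [hc] at h
        have hd : cs.wordProd (alternatingWord b a n) = (cs.simple b * cs.simple a) ^ q := by
          rw [cs.prod_alternatingWord_eq_mul_pow, if_pos ⟨q, hq⟩, one_mul]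
          congr 1
          omega
        rw [h, hd, ← inv_pow, hinv]
        calc (cs.simple a * cs.simple b) ^ q * cs.simple a * (cs.simple b * cs.simple a) ^ q
            = (cs.simple a * cs.simple b) ^ q * (cs.simple a * (cs.simple b * cs.simple a) ^ q) := by
              group
          _ = (cs.simple a * cs.simple b) ^ q * ((cs.simple a * cs.simple b) ^ q * cs.simple a) := by
              rw [simple_semiconj' cs b a q]
          _ = (cs.simple a * cs.simple b) ^ n * cs.simple a := by
              rw [← mul_assoc, ← pow_add]
              congr 2
              omega
      · obtain ⟨q, hq⟩ := hn
        have hc : (if Even n then a else b) = b := if_neg (by simp [hq, Nat.even_add_one, parity_simps])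
        rw [hc] at h
        have hd : cs.wordProd (alternatingWord b a n)
            = cs.simple a * (cs.simple b * cs.simple a) ^ q := by
          rw [cs.prod_alternatingWord_eq_mul_pow,
            if_neg (by simp [hq, Nat.even_add_one, parity_simps] : ¬ Even n)]
          congr 2
          omega
        rw [h, hd]
        rw [mul_inv_rev, ← inv_pow, hinv, cs.inv_simple]
        calc (cs.simple a * cs.simple b) ^ q * cs.simple a * cs.simple b
              * (cs.simple a * (cs.simple b * cs.simple a) ^ q)
            = (cs.simple a * cs.simple b) ^ q * (cs.simple a * cs.simple b)
              * (cs.simple a * (cs.simple b * cs.simple a) ^ q) := by group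
          _ = (cs.simple a * cs.simple b) ^ q * (cs.simple a * cs.simple b)
              * ((cs.simple a * cs.simple b) ^ q * cs.simple a) := by
              rw [simple_semiconj' cs b a q]
          _ = (cs.simple a * cs.simple b) ^ (q + 1 + q) * cs.simple a := by
              rw [pow_add, pow_add, pow_one]
              group
          _ = (cs.simple a * cs.simple b) ^ n * cs.simple a := by
              congr 2
              omega
    · obtain ⟨e, he, hr⟩ := ih h
      exact ⟨e, by omega, hr⟩

lemma simple_mul_prod_alternatingWord {x y : B} (hxy : x ≠ y) {c : B} (hc : c = x ∨ c = y)
    (n : ℕ) :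
    ∃ n' ≤ n + 1,
      cs.simple c * cs.wordProd (alternatingWord x y n) = cs.wordProd (alternatingWord x y n') ∨
      cs.simple c * cs.wordProd (alternatingWord x y n) = cs.wordProd (alternatingWord y x n') := by
  rcases n with _ | n₀
  · -- n = 0
    rcases hc with rfl | rfl
    · refine ⟨1, by omega, Or.inr ?_⟩
      simp [alternatingWord]
    · refine ⟨1, by omega, Or.inl ?_⟩
      simp [alternatingWord]
  · -- n = n₀ + 1
    have hsucc : alternatingWord x y (n₀ + 1)
        = (if Even n₀ then y else x) :: alternatingWord x y n₀ := alternatingWord_succ' x y n₀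
    set c₀ : B := if Even n₀ then y else x with hc₀
    rcases em (c = c₀) with hcc | hcc
    · -- cancellation
      refine ⟨n₀, by omega, Or.inl ?_⟩
      rw [hsucc, cs.wordProd_cons, hcc, ← mul_assoc, cs.simple_mul_simple_self, one_mul]
    · -- extension
      have hc₁ : c = (if Even (n₀ + 1) then y else x) := by
        rcases Nat.even_or_odd n₀ with he | ho
        · have : c₀ = y := by rw [hc₀, if_pos he]
          have hcx : c = x := by
            rcases hc with rfl | rfl
            · rfl
            · exact absurd this.symm hcc
          rw [hcx, if_neg (by simp [Nat.even_add_one, he])]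
        · have : c₀ = x := by rw [hc₀, if_neg (by simp [Nat.not_even_iff_odd.mpr ho])]
          have hcy : c = y := by
            rcases hc with rfl | rfl
            · exact absurd this.symm hcc
            · rfl
          rw [hcy, if_pos (by simp [Nat.even_add_one, Nat.not_even_iff_odd.mpr ho])]
      refine ⟨n₀ + 2, by omega, Or.inl ?_⟩
      rw [show n₀ + 2 = (n₀ + 1) + 1 by ring, alternatingWord_succ' x y (n₀ + 1),
        cs.wordProd_cons, ← hc₁]

lemma prod_eq_prod_alternatingWord {s t : B} (hst : s ≠ t) (γ : List B)
    (hγ : ∀ c ∈ γ, c = s ∨ c = t) :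
    ∃ n ≤ γ.length,
      cs.wordProd γ = cs.wordProd (alternatingWord s t n) ∨
      cs.wordProd γ = cs.wordProd (alternatingWord t s n) := by
  induction γ with
  | nil => exact ⟨0, by simp, Or.inl (by simp [alternatingWord])⟩
  | cons c γ ih =>
    obtain ⟨n, hn, hor⟩ := ih (fun c hc => hγ c (List.mem_cons_of_mem _ hc))
    have hc : c = s ∨ c = t := hγ c List.mem_cons_self
    rcases hor with h1 | h1
    · obtain ⟨n', hn', h'⟩ := simple_mul_prod_alternatingWord cs hst hc n
      refine ⟨n', by simp; omega, ?_⟩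
      rw [cs.wordProd_cons, h1]
      tauto
    · obtain ⟨n', hn', h'⟩ := simple_mul_prod_alternatingWord cs (Ne.symm hst)
        (Or.symm hc) n
      refine ⟨n', by simp; omega, ?_⟩
      rw [cs.wordProd_cons, h1]
      tauto



variable {B W : Type*} [Group W] {M : CoxeterMatrix B} (cs : CoxeterSystem M W)

lemma pow_simple_mul_ne_one {i j : B} (hij : i ≠ j) (h0 : M i j = 0) :
    ∀ n : ℕ, 1 ≤ n → (cs.simple i * cs.simple j) ^ n ≠ 1 := by
  intro n hn heq
  set ρ := cs.lift ⟨sigmaV M, sigmaV_liftable M⟩ with hρ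
  have h1 : ρ ((cs.simple i * cs.simple j) ^ n) = (sigmaV M i * sigmaV M j) ^ n := by
    rw [map_pow, map_mul, hρ, cs.lift_apply_simple, cs.lift_apply_simple]
  rw [heq, map_one] at h1
  have h2 := congrArg (fun f : Module.End ℝ (B →₀ ℝ) => (f (Finsupp.single i 1)) i) h1.symm
  rw [sigmaV_infinite M hij h0 n] at h2
  rw [Module.End.one_apply] at h2
  rw [Finsupp.add_apply, Finsupp.smul_apply, Finsupp.smul_apply,
    Finsupp.single_eq_same, Finsupp.single_eq_of_ne hij] at h2
  simp only [smul_eq_mul, mul_one, mul_zero, add_zero] at h2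
  have : (1:ℝ) ≤ n := by exact_mod_cast hn
  linarith

/-- The key inductive step. -/
lemma main_step {s t : B} (hst : s ≠ t)
    (hz : ∀ n : ℕ, 1 ≤ n → (cs.simple s * cs.simple t) ^ n ≠ 1)
    {w : W}
    (hmin : ∀ γ : List B, (∀ c ∈ γ, c = s ∨ c = t) →
      cs.length w ≤ cs.length (w * cs.wordProd γ))
    (k : ℕ)
    (ih : cs.length (w * cs.wordProd (alternatingWord t s k)) = cs.length w + k) :
    cs.length (w * cs.wordProd (alternatingWord s t (k+1))) = cs.length w + (k+1) := by
  obtain ⟨ω, hωlen, hωprod⟩ := cs.exists_reduced_word w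
  replace hωlen : ω.length = cs.length w := by
    rw [hωprod]; exact (hωlen : cs.length (cs.wordProd ω) = ω.length).symm
  set α := alternatingWord t s k with hα
  set u := cs.wordProd α with hu
  have hβprod : cs.wordProd (ω ++ α) = w * u := by
    rw [cs.wordProd_append, ← hωprod]
  have hβlen : (ω ++ α).length = cs.length w + k := by
    rw [List.length_append, hωlen, hα, CoxeterSystem.length_alternatingWord]
  have hβred : cs.IsReduced (ω ++ α) := by
    rw [CoxeterSystem.IsReduced, hβprod, hβlen, ih]
  have hnd : ¬ cs.IsRightDescent (w * u) t := by
    intro hd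
    have hmem : cs.simple t ∈ cs.rightInvSeq (ω ++ α) :=
      mem_ris_of_descent cs hd hβred hβprod
    rw [rightInvSeq_append] at hmem
    rcases List.mem_append.mp hmem with hmem | hmem
    · -- deletion in the ω part : contradicts minimality
      obtain ⟨r, hr, hrconj⟩ := List.mem_map.mp hmem
      have hrval : r = u * cs.simple t * u⁻¹ := by
        rw [← hrconj, hu]
        group
      obtain ⟨jdx, hjdx, hjr⟩ := List.mem_iff_getElem.mp hr
      have hjdx' : jdx < ω.length := by
        rwa [cs.length_rightInvSeq] at hjdx
      have hgetD : (cs.rightInvSeq ω).getD jdx 1 = r := by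
        rw [List.getD_eq_getElem _ _ hjdx, hjr]
      have herase : w * r = cs.wordProd (ω.eraseIdx jdx) := by
        rw [hωprod, ← hgetD]
        exact cs.wordProd_mul_getD_rightInvSeq ω jdx
      have hlen1 : cs.length (w * r) ≤ ω.length - 1 := by
        rw [herase]
        calc cs.length (cs.wordProd (ω.eraseIdx jdx)) ≤ (ω.eraseIdx jdx).length :=
              cs.length_wordProd_le _
          _ = ω.length - 1 := by rw [List.length_eraseIdx_of_lt hjdx']
      -- r = wordProd of a word in letters s, t
      set γ := α ++ t :: α.reverse with hγ
      have hγprod : cs.wordProd γ = r := by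
        rw [hγ, cs.wordProd_append, cs.wordProd_cons, cs.wordProd_reverse, hrval, ← hu]
        group
      have hγmem : ∀ c ∈ γ, c = s ∨ c = t := by
        intro c hc
        rw [hγ] at hc
        rcases List.mem_append.mp hc with hc | hc
        · rcases mem_alternatingWord hc with h | h
          · right; exact h
          · left; exact h
        · rcases List.mem_cons.mp hc with hc | hc
          · right; exact hc
          · rcases mem_alternatingWord (List.mem_reverse.mp hc) with h | h
            · right; exact h
            · left; exact h
      have := hmin γ hγmem
      rw [hγprod] at this
      omega
    · -- deletion in the α part : contradicts infinite order
      obtain ⟨e, he, hr⟩ := mem_ris_alternatingWord cs hmem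
      have hone : (cs.simple s * cs.simple t) ^ (e+1) = 1 := by
        calc (cs.simple s * cs.simple t)^(e+1)
            = ((cs.simple s * cs.simple t)^e * cs.simple s) * cs.simple t := by
              rw [pow_succ]; group
          _ = cs.simple t * cs.simple t := by rw [← hr]
          _ = 1 := cs.simple_mul_simple_self t
      exact hz (e+1) (by omega) hone
  rw [CoxeterSystem.not_isRightDescent_iff] at hnd
  have hconcat : alternatingWord s t (k+1) = α.concat t := by
    rw [hα, alternatingWord_succ]
  rw [hconcat, cs.wordProd_concat, ← hu, ← mul_assoc, hnd, ih]
  omega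


lemma main_both {s t : B} (hst : s ≠ t)
    (hz : ∀ n : ℕ, 1 ≤ n → (cs.simple s * cs.simple t) ^ n ≠ 1)
    {w : W}
    (hmin : ∀ γ : List B, (∀ c ∈ γ, c = s ∨ c = t) →
      cs.length w ≤ cs.length (w * cs.wordProd γ)) :
    ∀ k : ℕ, cs.length (w * cs.wordProd (alternatingWord s t k)) = cs.length w + k
      ∧ cs.length (w * cs.wordProd (alternatingWord t s k)) = cs.length w + k := by
  have hz' : ∀ n : ℕ, 1 ≤ n → (cs.simple t * cs.simple s) ^ n ≠ 1 := by
    intro n hn h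
    apply hz n hn
    have : ((cs.simple s * cs.simple t)⁻¹) ^ n = 1 := by
      rw [mul_inv_rev, cs.inv_simple, cs.inv_simple]
      exact h
    rwa [inv_pow, inv_eq_one] at this
  have hmin' : ∀ γ : List B, (∀ c ∈ γ, c = t ∨ c = s) →
      cs.length w ≤ cs.length (w * cs.wordProd γ) := by
    intro γ hγ
    exact hmin γ (fun c hc => (hγ c hc).symm)
  intro k
  induction k with
  | zero => simp [alternatingWord]
  | succ k ih =>
    exact ⟨main_step cs hst hz hmin k ih.2, main_step cs hst.symm hz' hmin' k ih.1⟩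

end StmtAux


theorem stmt_4 {B W : Type*} [Group W] {M : CoxeterMatrix B} (cs : CoxeterSystem M W)
    (hM : ∀ i i' : B, i ≠ i' → M i i' = 0 ∨ 3 ≤ M i i')
    (w : W) (s t : B) (hst : s ≠ t) (hinf : M s t = 0)
    (hs : cs.length w < cs.length (w * cs.simple s))
    (ht : cs.length w < cs.length (w * cs.simple t)) :
    ∀ k : ℕ,
      cs.length (w * cs.wordProd (alternatingWord s t k)) = cs.length w + k ∧
      cs.length (w * cs.wordProd (alternatingWord t s k)) = cs.length w + k := by
  classical
  have hz := StmtAux.pow_simple_mul_ne_one cs hst hinf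
  have hex : ∃ n : ℕ, ∃ γ : List B, (∀ c ∈ γ, c = s ∨ c = t)
      ∧ cs.length (w * cs.wordProd γ) = n :=
    ⟨cs.length w, [], by simp, by simp⟩
  obtain ⟨γ₀, hγ₀mem, hγ₀len⟩ := Nat.find_spec hex
  set w₀ := w * cs.wordProd γ₀ with hw₀
  have hmin₀ : ∀ γ : List B, (∀ c ∈ γ, c = s ∨ c = t) →
      cs.length w₀ ≤ cs.length (w₀ * cs.wordProd γ) := by
    intro γ hγ
    have h1 : w₀ * cs.wordProd γ = w * cs.wordProd (γ₀ ++ γ) := by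
      rw [hw₀, cs.wordProd_append, mul_assoc]
    have h2 : Nat.find hex ≤ cs.length (w₀ * cs.wordProd γ) := by
      apply Nat.find_min' hex
      exact ⟨γ₀ ++ γ, by
        intro c hc
        rcases List.mem_append.mp hc with hc | hc
        · exact hγ₀mem c hc
        · exact hγ c hc, by rw [← h1]⟩
    rw [hγ₀len]
    exact h2
  have hboth := StmtAux.main_both cs hst hz hmin₀
  -- w is itself minimal
  have hwrev : w = w₀ * cs.wordProd γ₀.reverse := by
    rw [hw₀, cs.wordProd_reverse, mul_assoc, mul_inv_cancel, mul_one]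
  have hγrevmem : ∀ c ∈ γ₀.reverse, c = s ∨ c = t := by
    intro c hc
    exact hγ₀mem c (List.mem_reverse.mp hc)
  obtain ⟨n, hn, hcase⟩ := StmtAux.prod_eq_prod_alternatingWord cs hst γ₀.reverse hγrevmem
  rcases n with _ | n'
  · -- n = 0 : w = w₀
    have hw : w = w₀ := by
      rcases hcase with h | h <;>
        rw [hwrev, h] <;> simp [alternatingWord]
    intro k
    rw [← hw] at hboth
    exact hboth k
  · -- n ≥ 1 : contradiction with hs or ht
    exfalso
    rcases hcase with h | h
    · -- π (rev γ₀) = π (alt s t (n'+1)), last letter t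
      have hw1 : w = w₀ * (cs.wordProd (alternatingWord t s n') * cs.simple t) := by
        rw [hwrev, h, alternatingWord_succ, cs.wordProd_concat]
      have hw2 : w * cs.simple t = w₀ * cs.wordProd (alternatingWord t s n') := by
        rw [hw1]
        rw [show w₀ * (cs.wordProd (alternatingWord t s n') * cs.simple t) * cs.simple t
            = w₀ * cs.wordProd (alternatingWord t s n') * (cs.simple t * cs.simple t) by group]
        rw [cs.simple_mul_simple_self, mul_one]
      have hl1 : cs.length w = cs.length w₀ + (n'+1) := by
        rw [hw1, ← cs.wordProd_concat, ← alternatingWord_succ]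
        exact (hboth (n'+1)).1
      have hl2 : cs.length (w * cs.simple t) = cs.length w₀ + n' := by
        rw [hw2]
        exact (hboth n').2
      omega
    · have hw1 : w = w₀ * (cs.wordProd (alternatingWord s t n') * cs.simple s) := by
        rw [hwrev, h, alternatingWord_succ, cs.wordProd_concat]
      have hw2 : w * cs.simple s = w₀ * cs.wordProd (alternatingWord s t n') := by
        rw [hw1]
        rw [show w₀ * (cs.wordProd (alternatingWord s t n') * cs.simple s) * cs.simple s
            = w₀ * cs.wordProd (alternatingWord s t n') * (cs.simple s * cs.simple s) by group]
        rw [cs.simple_mul_simple_self, mul_one]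
      have hl1 : cs.length w = cs.length w₀ + (n'+1) := by
        rw [hw1, ← cs.wordProd_concat, ← alternatingWord_succ]
        exact (hboth (n'+1)).2
      have hl2 : cs.length (w * cs.simple s) = cs.length w₀ + n' := by
        rw [hw2]
        exact (hboth n').1
      omega
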